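/- arXiv:1307.6140 — 4 statements merged into one kernel-verified Lean document; each statement's English description precedes it below -/
import Mathlib

section
/- Let k₁,u₀,u₁ ∈ ℂ∖{0} and let V₀,V₁,V̌₀,V̌₁ ∈ A satisfy the relations of the confluent Cherednik algebra H_V: V₀²+V₀=0, (V₁−k₁)(V₁+k₁⁻¹)=0, V̌₀²+u₀⁻¹V̌₀=0, (V̌₁−u₁)(V̌₁+u₁⁻¹)=0, t·V̌₁V₁V₀ = V̌₀+u₀⁻¹, t·V̌₀V̌₁V₁ = V₀+1. Define T := V̌₁, T' := V̌₁−u₁+u₁⁻¹ (the two-sided inverse of T), X := (V₁+k₁⁻¹−k₁)(V̌₁+u₁⁻¹−u₁), W := V̌₁V₁, Y := V̌₁V₀, and Z := (V₀+1)(V̌₁+u₁⁻¹−u₁). Then the Lusztig–Demazure-type relations of H_V hold: WX = XW = 1; ZY = YZ = 0; XT = T'W + k₁⁻¹ − k₁; ZT = T'Y + 1; (T−u₁)(T+u₁⁻¹) = 0; and YX = q·T²XY + q·(k₁−k₁⁻¹)·TY − TX − t·u₀⁻¹·T. -/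
/-- Lusztig–Demazure type presentation of the confluent Cherednik algebra `H_V`:
the elements `T, T', X, W, Y, Z` built from the generators satisfy the
Lusztig–Demazure relations. -/
theorem confluent_HV_lusztig_demazure {A : Type*} [Ring A] [Algebra ℂ A]
    (t q k₁ u₀ u₁ : ℂ) (ht : t ≠ 0) (hq : q = t ^ 2)
    (hk₁ : k₁ ≠ 0) (hu₀ : u₀ ≠ 0) (hu₁ : u₁ ≠ 0)
    (V₀ V₁ Vc₀ Vc₁ : A)
    (r₀ : V₀ * V₀ + V₀ = 0)
    (r₁ : (V₁ - k₁ • 1) * (V₁ + k₁⁻¹ • 1) = 0)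
    (rc₀ : Vc₀ * Vc₀ + u₀⁻¹ • Vc₀ = 0)
    (rc₁ : (Vc₁ - u₁ • 1) * (Vc₁ + u₁⁻¹ • 1) = 0)
    (r5 : t • (Vc₁ * V₁ * V₀) = Vc₀ + u₀⁻¹ • 1)
    (r6 : t • (Vc₀ * Vc₁ * V₁) = V₀ + 1)
    (T T' X W Y Z : A)
    (hT : T = Vc₁)
    (hT' : T' = Vc₁ - (u₁ - u₁⁻¹) • 1)
    (hX : X = (V₁ + (k₁⁻¹ - k₁) • 1) * (Vc₁ + (u₁⁻¹ - u₁) • 1))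
    (hW : W = Vc₁ * V₁)
    (hY : Y = Vc₁ * V₀)
    (hZ : Z = (V₀ + 1) * (Vc₁ + (u₁⁻¹ - u₁) • 1)) :
    W * X = 1 ∧ X * W = 1 ∧
    Z * Y = 0 ∧ Y * Z = 0 ∧
    X * T = T' * W + (k₁⁻¹ - k₁) • (1 : A) ∧
    Z * T = T' * Y + 1 ∧
    (T - u₁ • 1) * (T + u₁⁻¹ • 1) = 0 ∧
    Y * X = q • (T ^ 2 * X * Y) + (q * (k₁ - k₁⁻¹)) • (T * Y)
        - T * X - (t * u₀⁻¹) • T := by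
  subst hT hT' hW hY hZ hq
  have hk : k₁ * k₁⁻¹ = 1 := mul_inv_cancel₀ hk₁
  have hk' : k₁⁻¹ * k₁ = 1 := inv_mul_cancel₀ hk₁
  have hu : u₁ * u₁⁻¹ = 1 := mul_inv_cancel₀ hu₁
  have hu' : u₁⁻¹ * u₁ = 1 := inv_mul_cancel₀ hu₁
  -- quadratic relation consequences
  have L1 : V₁ * (V₁ + (k₁⁻¹ - k₁) • 1) = 1 := by
    simp only [mul_add, add_mul, sub_mul, mul_sub, smul_mul_assoc, mul_smul_comm, smul_smul,
      mul_one, one_mul, smul_add, smul_sub, sub_smul, add_smul, hk, hk', one_smul] at r₁ ⊢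
    linear_combination (norm := module) r₁
  have L2 : (V₁ + (k₁⁻¹ - k₁) • 1) * V₁ = 1 := by
    simp only [mul_add, add_mul, sub_mul, mul_sub, smul_mul_assoc, mul_smul_comm, smul_smul,
      mul_one, one_mul, smul_add, smul_sub, sub_smul, add_smul, hk, hk', one_smul] at r₁ ⊢
    linear_combination (norm := module) r₁
  have L3 : T * (T + (u₁⁻¹ - u₁) • 1) = 1 := by
    simp only [mul_add, add_mul, sub_mul, mul_sub, smul_mul_assoc, mul_smul_comm, smul_smul,
      mul_one, one_mul, smul_add, smul_sub, sub_smul, add_smul, hu, hu', one_smul] at rc₁ ⊢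
    linear_combination (norm := module) rc₁
  have L4 : (T + (u₁⁻¹ - u₁) • 1) * T = 1 := by
    simp only [mul_add, add_mul, sub_mul, mul_sub, smul_mul_assoc, mul_smul_comm, smul_smul,
      mul_one, one_mul, smul_add, smul_sub, sub_smul, add_smul, hu, hu', one_smul] at rc₁ ⊢
    linear_combination (norm := module) rc₁
  have hT'' : T - (u₁ - u₁⁻¹) • (1 : A) = T + (u₁⁻¹ - u₁) • 1 := by module
  have Z0 : (V₀ + 1) * V₀ = 0 := by rw [add_mul, one_mul]; exact r₀
  have Z0' : V₀ * (V₀ + 1) = 0 := by rw [mul_add, mul_one]; exact r₀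
  -- part 1
  have p1 : T * V₁ * X = 1 := by
    rw [hX, mul_assoc, ← mul_assoc V₁, L1, one_mul, L3]
  have p2 : X * (T * V₁) = 1 := by
    rw [hX, mul_assoc, ← mul_assoc (T + (u₁⁻¹ - u₁) • 1), L4, one_mul, L2]
  have hXVc : X * T = V₁ + (k₁⁻¹ - k₁) • 1 := by
    rw [hX, mul_assoc, L4, mul_one]
  refine ⟨p1, p2, ?_, ?_, ?_, ?_, rc₁, ?_⟩
  · rw [mul_assoc, ← mul_assoc (T + (u₁⁻¹ - u₁) • 1), L4, one_mul, Z0]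
  · rw [mul_assoc, ← mul_assoc V₀, Z0', zero_mul, mul_zero]
  · rw [hXVc, hT'', ← mul_assoc, L4, one_mul]
  · rw [hT'', mul_assoc, L4, mul_one, ← mul_assoc, L4, one_mul]
  · -- the main relation
    have hVc0 : Vc₀ = t • (T * V₁ * V₀) - u₀⁻¹ • (1 : A) := eq_sub_of_add_eq r5.symm
    rw [hVc0] at r6
    have p1' : T * (V₁ * X) = 1 := by rw [← mul_assoc]; exact p1
    have hE : (t * t) • (T * (V₁ * (V₀ * (T * V₁)))) - (t * u₀⁻¹) • (T * V₁)
        = V₀ + 1 := by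
      rw [← r6]
      simp only [sub_mul, smul_mul_assoc, one_mul, smul_sub, smul_smul, mul_assoc]
    have h2 : T * (((t * t) • (T * (V₁ * (V₀ * (T * V₁)))) - (t * u₀⁻¹) • (T * V₁)) * X)
        = T * ((V₀ + 1) * X) := by rw [hE]
    have key : T * (V₀ * X) = (t * t) • (T * (T * (V₁ * V₀)))
        - (t * u₀⁻¹) • T - T * X := by
      simp only [sub_mul, add_mul, one_mul, smul_mul_assoc, mul_sub, mul_add,
        mul_smul_comm, mul_assoc, p1', mul_one] at h2
      linear_combination (norm := module) -h2
    have hXVc0 : X * (T * V₀) = V₁ * V₀ + (k₁⁻¹ - k₁) • V₀ := by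
      rw [← mul_assoc, hXVc, add_mul, smul_mul_assoc, one_mul]
    calc T * V₀ * X = T * (V₀ * X) := by rw [mul_assoc]
      _ = _ := by
          rw [key]
          simp only [pow_two, mul_assoc, hXVc0, mul_add, mul_smul_comm, smul_add, smul_smul]
          match_scalars <;> ring
end

section
/- Let q,a ∈ ℂ with q ≠ 0. On the space of all functions f : ℂ∖{0} → ℂ define the linear operators (K₁f)(x) := x·f(x) and (K₀f)(x) := x⁻¹·((1+a)·f(x) + (x−1)·f(x/q) − a·f(qx)). Then, as operators on this space, (q+q⁻¹)·K₁K₀K₁ − K₁²K₀ − K₀K₁² = B·K₁ and (q+q⁻¹)·K₀K₁K₀ − K₀²K₁ − K₁K₀² = B·K₀ + D₁·Id, where B := (q−1)²(1+a)/q and D₁ := −(q−1)²(q+1)·a/q. (These are the defining relations of the confluent Zhedanov algebra Z_II, with C₀ = 0 and D₀ = 0; in particular K₀ and K₁ give a representation of Z_II, which restricts to the space of polynomials.) -/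
set_option maxHeartbeats 2000000


/-- The operators `K₀, K₁` of the basic representation of the confluent
Zhedanov algebra `Z_II` on functions on `ℂ∖{0}` satisfy the defining relations
of `Z_II` (with `C₀ = 0`, `D₀ = 0`). -/
theorem zhedanov_ZII_basic_representation (q a : ℂ) (hq : q ≠ 0)
    (B D₁ : ℂ)
    (hB : B = (q - 1) ^ 2 * (1 + a) / q)
    (hD₁ : D₁ = -((q - 1) ^ 2 * (q + 1) * a / q))
    (K₁ K₀ : ({x : ℂ // x ≠ 0} → ℂ) → ({x : ℂ // x ≠ 0} → ℂ))
    (hK₁ : ∀ f x, K₁ f x = x.1 * f x)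
    (hK₀ : ∀ f x, K₀ f x = (x.1)⁻¹ * ((1 + a) * f x
        + (x.1 - 1) * f ⟨x.1 / q, div_ne_zero x.2 hq⟩
        - a * f ⟨q * x.1, mul_ne_zero hq x.2⟩)) :
    (∀ f x, (q + q⁻¹) * K₁ (K₀ (K₁ f)) x - K₁ (K₁ (K₀ f)) x - K₀ (K₁ (K₁ f)) x
        = B * K₁ f x) ∧
    (∀ f x, (q + q⁻¹) * K₀ (K₁ (K₀ f)) x - K₀ (K₀ (K₁ f)) x - K₁ (K₀ (K₀ f)) x
        = B * K₀ f x + D₁ * f x) := by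
  have key : ∀ (f : {x : ℂ // x ≠ 0} → ℂ) (x : {x : ℂ // x ≠ 0}),
      ∃ g : ℂ → ℂ, (∀ v (hv : v ≠ 0), f ⟨v, hv⟩ = g v) ∧ f x = g x.1 := by
    intro f x
    refine ⟨fun z => if h : z ≠ 0 then f ⟨z, h⟩ else 0, fun v hv => ?_, ?_⟩
    · simp only [dif_pos hv]
    · simp only [dif_pos x.2]
  constructor
  · intro f x
    obtain ⟨g, hg, hgx⟩ := key f x
    have h1 : q * (x.1 / q) = x.1 := mul_div_cancel₀ _ hq
    have h2 : q * x.1 / q = x.1 := by field_simp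
    simp only [hK₁, hK₀, hg, hgx, h1, h2, hB]
    have hx := x.2
    field_simp
    ring
  · intro f x
    obtain ⟨g, hg, hgx⟩ := key f x
    have h1 : q * (x.1 / q) = x.1 := mul_div_cancel₀ _ hq
    have h2 : q * x.1 / q = x.1 := by field_simp
    simp only [hK₁, hK₀, hg, hgx, h1, h2, hB, hD₁]
    have hx := x.2
    have hxq : x.1 / q ≠ 0 := div_ne_zero hx hq
    have hqx : q * x.1 ≠ 0 := mul_ne_zero hq hx
    set g1 := g x.1 with hg1
    set g2 := g (x.1 / q) with hg2
    set g3 := g (q * x.1) with hg3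
    set g4 := g (x.1 / q / q) with hg4
    set g5 := g (q * (q * x.1)) with hg5
    simp only [inv_div, mul_inv]
    linear_combination (((-1)*a*g1 + (-2)*(x.1)⁻¹*g2 + (2)*(x.1)⁻¹*g1 + (-2)*(x.1)⁻¹*a*g3 + (-2)*(x.1)⁻¹*a*g2 + (4)*(x.1)⁻¹*a*g1 + (-2)*(x.1)⁻¹*a^2*g3 + (2)*(x.1)⁻¹*a^2*g1 + (2)*(x.1)*(x.1)⁻¹*g2 + (2)*(x.1)*(x.1)⁻¹*a*g2 + (1)*(x.1)*(x.1)⁻¹^2*g2 + (1)*(x.1)*(x.1)⁻¹^2*a*g3 + (1)*(x.1)*(x.1)⁻¹^2*a*g2 + (1)*(x.1)*(x.1)⁻¹^2*a^2*g3 + (-1)*(x.1)^2*(x.1)⁻¹^2*g2 + (-1)*(x.1)^2*(x.1)⁻¹^2*a*g2 + (1)*(x.1)^2*(x.1)⁻¹^2*a*g1 + (-1)*q⁻¹*(x.1)*(x.1)⁻¹^2*g2 + (-1)*q⁻¹*(x.1)*(x.1)⁻¹^2*a*g3 + (-1)*q⁻¹*(x.1)*(x.1)⁻¹^2*a*g2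 + (2)*q⁻¹*(x.1)*(x.1)⁻¹^2*a*g1 + (1)*q⁻¹*(x.1)*(x.1)⁻¹^2*a^2*g5 + (-1)*q⁻¹*(x.1)*(x.1)⁻¹^2*a^2*g3 + (1)*q⁻¹*(x.1)^2*(x.1)⁻¹^2*g2 + (1)*q⁻¹*(x.1)^2*(x.1)⁻¹^2*a*g2 + (-1)*q⁻¹*(x.1)^2*(x.1)⁻¹^2*a*g1 + (-1)*q*a*g1 + (1)*q*(x.1)⁻¹*g2 + (-1)*q*(x.1)⁻¹*g1 + (1)*q*(x.1)⁻¹*a*g3 + (1)*q*(x.1)⁻¹*a*g2 + (-2)*q*(x.1)⁻¹*a*g1 + (1)*q*(x.1)⁻¹*a^2*g3 + (-1)*q*(x.1)⁻¹*a^2*g1 + (-1)*q*(x.1)*(x.1)⁻¹*g2 + (-1)*q*(x.1)*(x.1)⁻¹*a*g2 + (1)*q*(x.1)*(x.1)⁻¹^2*g4 + (-1)*q*(x.1)*(x.1)⁻¹^2*g2 + (-1)*q*(x.1)*(x.1)⁻¹^2*a*g3 + (-1)*q*(x.1)*(x.1)⁻¹^2*a*g2 + (2)*q*(x.1)*(x.1)⁻¹^2*a*g1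 + (-1)*q*(x.1)*(x.1)⁻¹^2*a^2*g3 + (-1)*q*(x.1)^2*(x.1)⁻¹^2*g4 + (1)*q*(x.1)^2*(x.1)⁻¹^2*g2 + (1)*q*(x.1)^2*(x.1)⁻¹^2*a*g2 + (-1)*q*(x.1)^2*(x.1)⁻¹^2*a*g1 + (-1)*q*q⁻¹*(x.1)^2*(x.1)⁻¹^2*g4 + (-1)*q*q⁻¹*(x.1)^2*(x.1)⁻¹^2*a*g1 + (1)*q*q⁻¹*(x.1)^3*(x.1)⁻¹^2*g4 + (1)*q^2*a*g1 + (-1)*q^2*(x.1)^2*(x.1)⁻¹^2*a*g1)) * (mul_inv_cancel₀ hq) + (((1)*a*g1 + (2)*(x.1)⁻¹*g2 + (-2)*(x.1)⁻¹*g1 + (2)*(x.1)⁻¹*a*g3 + (2)*(x.1)⁻¹*a*g2 + (-4)*(x.1)⁻¹*a*g1 + (2)*(x.1)⁻¹*a^2*g3 + (-2)*(x.1)⁻¹*a^2*g1 + (-2)*(x.1)*(x.1)⁻¹*g2 + (-2)*(x.1)*(x.1)⁻¹*a*g2 + (1)*(x.1)*(x.1)⁻¹*a*g1 + (-1)*q⁻¹*a*g1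 + (-1)*q⁻¹*(x.1)⁻¹*g2 + (1)*q⁻¹*(x.1)⁻¹*g1 + (-1)*q⁻¹*(x.1)⁻¹*a*g3 + (-1)*q⁻¹*(x.1)⁻¹*a*g2 + (2)*q⁻¹*(x.1)⁻¹*a*g1 + (-1)*q⁻¹*(x.1)⁻¹*a^2*g3 + (1)*q⁻¹*(x.1)⁻¹*a^2*g1 + (1)*q⁻¹*(x.1)*(x.1)⁻¹*g2 + (1)*q⁻¹*(x.1)*(x.1)⁻¹*a*g2 + (-1)*q⁻¹*(x.1)*(x.1)⁻¹*a*g1 + (1)*q*a*g1 + (-1)*q*(x.1)⁻¹*g2 + (1)*q*(x.1)⁻¹*g1 + (-1)*q*(x.1)⁻¹*a*g3 + (-1)*q*(x.1)⁻¹*a*g2 + (2)*q*(x.1)⁻¹*a*g1 + (-1)*q*(x.1)⁻¹*a^2*g3 + (1)*q*(x.1)⁻¹*a^2*g1 + (1)*q*(x.1)*(x.1)⁻¹*g2 + (1)*q*(x.1)*(x.1)⁻¹*a*g2 + (1)*q*(x.1)*(x.1)⁻¹*a*g1 + (-1)*q^2*a*g1 + (-1)*q^2*(x.1)*(x.1)⁻¹*a*g1))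 * (mul_inv_cancel₀ hx)
end

section
/- Fix n ∈ ℕ and q,a ∈ ℂ with q ≠ 0, q^j ≠ 1 for 1 ≤ j ≤ n, and a·q^j ≠ 1 for 1 ≤ j ≤ n. Define the little q-Laguerre (Wall) polynomial p_n(x) := Σ_{k=0}^{n} [(q^{−n};q)_k / ((a q;q)_k·(q;q)_k)]·(q x)^k. Then p_n is an eigenfunction of the operator K₀ of the basic representation of the confluent Zhedanov algebra Z_II with eigenvalue q^{−n}: for every x ∈ ℂ∖{0}, x⁻¹·((1+a)·p_n(x) + (x−1)·p_n(x/q) − a·p_n(q x)) = q^{−n}·p_n(x). -/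
open Finset

/-- The q-Pochhammer symbol `(z; q)_k`. -/
noncomputable def qPoch (z q : ℂ) (k : ℕ) : ℂ := ∏ j ∈ Finset.range k, (1 - z * q ^ j)

lemma qPoch_succ (z q : ℂ) (k : ℕ) :
    qPoch z q (k + 1) = qPoch z q k * (1 - z * q ^ k) := Finset.prod_range_succ _ _

/-- The little q-Laguerre (Wall) polynomials are eigenfunctions of the operator
`K₀` of the basic representation of the confluent Zhedanov algebra `Z_II`,
with eigenvalue `q⁻ⁿ`. -/
theorem littleQLaguerre_eigenfunction (n : ℕ) (q a : ℂ) (hq : q ≠ 0)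
    (hqj : ∀ j : ℕ, 1 ≤ j → j ≤ n → q ^ j ≠ 1)
    (haj : ∀ j : ℕ, 1 ≤ j → j ≤ n → a * q ^ j ≠ 1)
    (p : ℂ → ℂ)
    (hp : ∀ x : ℂ, p x = ∑ k ∈ Finset.range (n + 1),
        qPoch (q ^ n)⁻¹ q k / (qPoch (a * q) q k * qPoch q q k) * (q * x) ^ k) :
    ∀ x : ℂ, x ≠ 0 →
      x⁻¹ * ((1 + a) * p x + (x - 1) * p (x / q) - a * p (q * x))
        = (q ^ n)⁻¹ * p x := by
  intro x hx
  set c : ℕ → ℂ := fun k => qPoch (q ^ n)⁻¹ q k / (qPoch (a * q) q k * qPoch q q k) with hc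
  -- nonvanishing of denominators
  have hB : ∀ k ≤ n, qPoch (a * q) q k ≠ 0 := by
    intro k hk
    unfold qPoch
    rw [Finset.prod_ne_zero_iff]
    intro j hj h
    simp only [Finset.mem_range] at hj
    apply haj (j + 1) (by omega) (by omega)
    have h1 : (1 : ℂ) = a * q * q ^ j := sub_eq_zero.mp h
    rw [pow_succ]; linear_combination -h1
  have hC : ∀ k ≤ n, qPoch q q k ≠ 0 := by
    intro k hk
    unfold qPoch
    rw [Finset.prod_ne_zero_iff]
    intro j hj h
    simp only [Finset.mem_range] at hj
    apply hqj (j + 1) (by omega) (by omega)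
    have h1 : (1 : ℂ) = q * q ^ j := sub_eq_zero.mp h
    rw [pow_succ]; linear_combination -h1
  -- the telescoping function
  set g : ℕ → ℂ := fun k => c k * ((1 - q ^ k) * (1 - a * q ^ k)) * x ^ k with hg
  -- key recurrence
  have key : ∀ k < n, c k * (1 - (q ^ n)⁻¹ * q ^ k) * x ^ (k + 1) = g (k + 1) := by
    intro k hk
    have h1 : (1 : ℂ) - q ^ (k + 1) ≠ 0 := by
      intro h
      exact hqj (k + 1) (by omega) (by omega) (sub_eq_zero.mp h).symm
    have h2 : (1 : ℂ) - a * q ^ (k + 1) ≠ 0 := by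
      intro h
      exact haj (k + 1) (by omega) (by omega) (sub_eq_zero.mp h).symm
    have hBk := hB k (by omega)
    have hCk := hC k (by omega)
    simp only [hg, hc, qPoch_succ]
    have e1 : (1 : ℂ) - a * q * q ^ k = 1 - a * q ^ (k + 1) := by ring
    have e2 : (1 : ℂ) - q * q ^ k = 1 - q ^ (k + 1) := by ring
    rw [e1, e2]
    field_simp
  have hg0 : g 0 = 0 := by simp [hg]
  have hqn : (q ^ n)⁻¹ * q ^ n = 1 := inv_mul_cancel₀ (pow_ne_zero n hq)
  -- the sum identity
  have hsum : ∑ k ∈ Finset.range (n + 1),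
      (c k * (1 - (q ^ n)⁻¹ * q ^ k) * x ^ (k + 1) - g k) = 0 := by
    rw [Finset.sum_range_succ]
    have hlast : c n * (1 - (q ^ n)⁻¹ * q ^ n) * x ^ (n + 1) - g n = -g n := by
      rw [hqn]; ring
    rw [hlast]
    have hmid : ∑ k ∈ Finset.range n,
        (c k * (1 - (q ^ n)⁻¹ * q ^ k) * x ^ (k + 1) - g k)
        = ∑ k ∈ Finset.range n, (g (k + 1) - g k) := by
      apply Finset.sum_congr rfl
      intro k hk
      rw [key k (Finset.mem_range.mp hk)]
    rw [hmid, Finset.sum_range_sub, hg0]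
    ring
  -- expand p and reduce to hsum
  rw [hp x, hp (x / q), hp (q * x)]
  have hxq : q * (x / q) = x := by field_simp
  rw [hxq]
  rw [inv_mul_eq_iff_eq_mul₀ hx]
  have expand : (1 + a) * ∑ k ∈ Finset.range (n + 1), c k * (q * x) ^ k
      + (x - 1) * ∑ k ∈ Finset.range (n + 1), c k * x ^ k
      - a * ∑ k ∈ Finset.range (n + 1), c k * (q * (q * x)) ^ k
      - x * ((q ^ n)⁻¹ * ∑ k ∈ Finset.range (n + 1), c k * (q * x) ^ k)
      = ∑ k ∈ Finset.range (n + 1),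
          (c k * (1 - (q ^ n)⁻¹ * q ^ k) * x ^ (k + 1) - g k) := by
    simp only [Finset.mul_sum, ← Finset.sum_sub_distrib, ← Finset.sum_add_distrib]
    apply Finset.sum_congr rfl
    intro k _
    simp only [hg, mul_pow]
    ring
  rw [hsum] at expand
  linear_combination expand
end

section
/- Fix n ∈ ℕ and q,a,b,c ∈ ℂ with q ≠ 0, q^j ≠ 1, a·q^j ≠ 1 and c·q^j ≠ 1 for 1 ≤ j ≤ n. Define the big q-Jacobi polynomial P_n(x) := Σ_{k=0}^{n} [(q^{−n};q)_k·(a b q^{n+1};q)_k·(x;q)_k / ((q;q)_k·(a q;q)_k·(c q;q)_k)]·q^k. Then P_n is an eigenfunction, with eigenvalue q^{−n}·(1 + a b q^{2n+1}), of the operator K₀^γ of the basic representation of the confluent Zhedanov algebra Z_V^γ (written here in the rescaled variable, i.e. the paper's identity K₀^γ P_n[λx] = q^{−n}(1+a b q^{2n+1})P_n[λx]): for every x ∈ ℂ∖{0}, [q·(c x + a·(x(1+b) − c·(1+q−x)))/x²]·P_n(x) + [(x−q a)(x−q c)/x²]·P_n(x/q) + [q·(x−1)·a·(b x−c)/x²]·P_n(q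 x) = q^{−n}·(1 + a b q^{2n+1})·P_n(x). -/
open Finset

lemma qPoch_zero (z q : ℂ) : qPoch z q 0 = 1 := by simp [qPoch]

lemma qPoch_succ_left (z q : ℂ) (k : ℕ) :
    qPoch z q (k + 1) = (1 - z) * qPoch (z * q) q k := by
  rw [qPoch, Finset.prod_range_succ']
  simp only [pow_zero, mul_one, qPoch]
  rw [mul_comm]
  congr 1
  apply Finset.prod_congr rfl
  intro j _
  ring

lemma qPoch_ne_zero_of (z q : ℂ) (k : ℕ) (h : ∀ j : ℕ, j < k → z * q ^ j ≠ 1) :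
    qPoch z q k ≠ 0 := by
  rw [qPoch]
  apply Finset.prod_ne_zero_iff.mpr
  intro j hj
  have := h j (Finset.mem_range.mp hj)
  intro h0
  apply this
  linear_combination -h0

set_option maxHeartbeats 2000000 in
/-- The big q-Jacobi polynomials are eigenfunctions, with eigenvalue
`q⁻ⁿ(1 + a b q^{2n+1})`, of the operator `K₀^γ` of the basic representation of
the confluent Zhedanov algebra `Z_V^γ` (in the rescaled variable). -/
theorem bigQJacobi_eigenfunction (n : ℕ) (q a b c : ℂ) (hq : q ≠ 0)
    (hqj : ∀ j : ℕ, 1 ≤ j → j ≤ n → q ^ j ≠ 1)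
    (haj : ∀ j : ℕ, 1 ≤ j → j ≤ n → a * q ^ j ≠ 1)
    (hcj : ∀ j : ℕ, 1 ≤ j → j ≤ n → c * q ^ j ≠ 1)
    (P : ℂ → ℂ)
    (hP : ∀ x : ℂ, P x = ∑ k ∈ Finset.range (n + 1),
        qPoch (q ^ n)⁻¹ q k * qPoch (a * b * q ^ (n + 1)) q k * qPoch x q k
          / (qPoch q q k * qPoch (a * q) q k * qPoch (c * q) q k) * q ^ k) :
    ∀ x : ℂ, x ≠ 0 →
      q * (c * x + a * (x * (1 + b) - c * (1 + q - x))) / x ^ 2 * P x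
        + (x - q * a) * (x - q * c) / x ^ 2 * P (x / q)
        + q * (x - 1) * a * (b * x - c) / x ^ 2 * P (q * x)
        = (q ^ n)⁻¹ * (1 + a * b * q ^ (2 * n + 1)) * P x := by
  intro x hx
  have hN : (q : ℂ) ^ n ≠ 0 := pow_ne_zero _ hq
  -- the coefficient sequence (without the `q ^ k` factor)
  set C : ℕ → ℂ := fun k =>
    qPoch (q ^ n)⁻¹ q k * qPoch (a * b * q ^ (n + 1)) q k
      / (qPoch q q k * qPoch (a * q) q k * qPoch (c * q) q k) with hC
  -- denominators are nonzero for k ≤ n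
  have hD1 : ∀ k : ℕ, k ≤ n → qPoch q q k ≠ 0 := by
    intro k hk
    apply qPoch_ne_zero_of
    intro j hj h1
    exact hqj (j + 1) (by omega) (by omega) (by rw [pow_succ]; linear_combination h1)
  have hD2 : ∀ k : ℕ, k ≤ n → qPoch (a * q) q k ≠ 0 := by
    intro k hk
    apply qPoch_ne_zero_of
    intro j hj h1
    exact haj (j + 1) (by omega) (by omega) (by rw [pow_succ]; linear_combination h1)
  have hD3 : ∀ k : ℕ, k ≤ n → qPoch (c * q) q k ≠ 0 := by
    intro k hk
    apply qPoch_ne_zero_of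
    intro j hj h1
    exact hcj (j + 1) (by omega) (by omega) (by rw [pow_succ]; linear_combination h1)
  -- top coefficient vanishes
  have hCtop : C (n + 1) = 0 := by
    have h0 : qPoch (q ^ n)⁻¹ q (n + 1) = 0 := by
      rw [qPoch]
      apply Finset.prod_eq_zero (Finset.self_mem_range_succ n)
      rw [inv_mul_cancel₀ hN]
      ring
    simp [hC, h0]
  -- the coefficient recurrence
  have hRatio : ∀ k : ℕ, k ≤ n →
      C (k + 1) * ((1 - q * q ^ k) * (1 - a * q * q ^ k) * (1 - c * q * q ^ k))
        = C k * ((1 - (q ^ n)⁻¹ * q ^ k) * (1 - a * b * q ^ (n + 1) * q ^ k)) := by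
    intro k hk
    rcases eq_or_lt_of_le hk with hkn | hkn
    · subst hkn
      rw [hCtop, inv_mul_cancel₀ hN]
      ring
    · have h1 := hD1 k (le_of_lt hkn)
      have h2 := hD2 k (le_of_lt hkn)
      have h3 := hD3 k (le_of_lt hkn)
      have hf1 : (1 : ℂ) - q * q ^ k ≠ 0 := by
        intro h0; exact hqj (k + 1) (by omega) hkn (by rw [pow_succ]; linear_combination -h0)
      have hf2 : (1 : ℂ) - a * q * q ^ k ≠ 0 := by
        intro h0; exact haj (k + 1) (by omega) hkn (by rw [pow_succ]; linear_combination -h0)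
      have hf3 : (1 : ℂ) - c * q * q ^ k ≠ 0 := by
        intro h0; exact hcj (k + 1) (by omega) hkn (by rw [pow_succ]; linear_combination -h0)
      simp only [hC]
      rw [qPoch_succ, qPoch_succ, qPoch_succ, qPoch_succ, qPoch_succ]
      rw [div_mul_eq_mul_div, div_mul_eq_mul_div,
        div_eq_div_iff (mul_ne_zero (mul_ne_zero (mul_ne_zero h1 hf1) (mul_ne_zero h2 hf2))
          (mul_ne_zero h3 hf3)) (mul_ne_zero (mul_ne_zero h1 h2) h3)]
      ring
  -- the telescoping certificate
  set G : ℕ → ℂ := fun m =>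
    C m * qPoch x q (m - 1) * ((1 - q ^ m) * (1 - a * q ^ m) * (1 - c * q ^ m))
    with hG
  have hG0 : G 0 = 0 := by simp [hG]
  have hGtop : G (n + 1) = 0 := by simp [hG, hCtop]
  -- rewrite G (k+1) using the recurrence
  have hGsucc : ∀ k : ℕ, k ≤ n →
      G (k + 1) = C k * ((1 - (q ^ n)⁻¹ * q ^ k) * (1 - a * b * q ^ (n + 1) * q ^ k))
        * qPoch x q k := by
    intro k hk
    have h : G (k + 1) = C (k + 1) * ((1 - q * q ^ k) * (1 - a * q * q ^ k) * (1 - c * q * q ^ k))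
        * qPoch x q k := by
      simp only [hG, Nat.add_sub_cancel, pow_succ]
      ring
    rw [h, hRatio k hk]
  -- the key per-k telescoping identity
  have key : ∀ k ∈ Finset.range (n + 1),
      q * (c * x + a * (x * (1 + b) - c * (1 + q - x))) / x ^ 2 *
          (qPoch (q ^ n)⁻¹ q k * qPoch (a * b * q ^ (n + 1)) q k * qPoch x q k
            / (qPoch q q k * qPoch (a * q) q k * qPoch (c * q) q k) * q ^ k)
        + (x - q * a) * (x - q * c) / x ^ 2 *
          (qPoch (q ^ n)⁻¹ q k * qPoch (a * b * q ^ (n + 1)) q k * qPoch (x / q) q k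
            / (qPoch q q k * qPoch (a * q) q k * qPoch (c * q) q k) * q ^ k)
        + q * (x - 1) * a * (b * x - c) / x ^ 2 *
          (qPoch (q ^ n)⁻¹ q k * qPoch (a * b * q ^ (n + 1)) q k * qPoch (q * x) q k
            / (qPoch q q k * qPoch (a * q) q k * qPoch (c * q) q k) * q ^ k)
        - (q ^ n)⁻¹ * (1 + a * b * q ^ (2 * n + 1)) *
          (qPoch (q ^ n)⁻¹ q k * qPoch (a * b * q ^ (n + 1)) q k * qPoch x q k
            / (qPoch q q k * qPoch (a * q) q k * qPoch (c * q) q k) * q ^ k)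
        = G (k + 1) - G k := by
    intro k hk
    rw [Finset.mem_range] at hk
    have hkn : k ≤ n := by omega
    have hlhs : q * (c * x + a * (x * (1 + b) - c * (1 + q - x))) / x ^ 2 *
          (qPoch (q ^ n)⁻¹ q k * qPoch (a * b * q ^ (n + 1)) q k * qPoch x q k
            / (qPoch q q k * qPoch (a * q) q k * qPoch (c * q) q k) * q ^ k)
        + (x - q * a) * (x - q * c) / x ^ 2 *
          (qPoch (q ^ n)⁻¹ q k * qPoch (a * b * q ^ (n + 1)) q k * qPoch (x / q) q k
            / (qPoch q q k * qPoch (a * q) q k * qPoch (c * q) q k) * q ^ k)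
        + q * (x - 1) * a * (b * x - c) / x ^ 2 *
          (qPoch (q ^ n)⁻¹ q k * qPoch (a * b * q ^ (n + 1)) q k * qPoch (q * x) q k
            / (qPoch q q k * qPoch (a * q) q k * qPoch (c * q) q k) * q ^ k)
        - (q ^ n)⁻¹ * (1 + a * b * q ^ (2 * n + 1)) *
          (qPoch (q ^ n)⁻¹ q k * qPoch (a * b * q ^ (n + 1)) q k * qPoch x q k
            / (qPoch q q k * qPoch (a * q) q k * qPoch (c * q) q k) * q ^ k)
        = C k * (q ^ k * (q * (c * x + a * (x * (1 + b) - c * (1 + q - x))) / x ^ 2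
              - (q ^ n)⁻¹ * (1 + a * b * q ^ (2 * n + 1))) * qPoch x q k
            + q ^ k * ((x - q * a) * (x - q * c) / x ^ 2) * qPoch (x / q) q k
            + q ^ k * (q * (x - 1) * a * (b * x - c) / x ^ 2) * qPoch (q * x) q k) := by
      simp only [hC]
      ring
    rw [hlhs, hGsucc k hkn]
    have hpow : q ^ (2 * n + 1) = q ^ n * q ^ n * q := by
      rw [show 2 * n + 1 = n + n + 1 by omega, pow_succ, pow_add]
    have hxi : x * x⁻¹ = 1 := mul_inv_cancel₀ hx
    have hqi : q * q⁻¹ = 1 := mul_inv_cancel₀ hq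
    have hNi : q ^ n * (q ^ n)⁻¹ = 1 := mul_inv_cancel₀ hN
    rcases k with _ | j
    · -- k = 0
      have hC0 : C 0 = 1 := by simp [hC, qPoch_zero]
      rw [hG0, hC0, hpow, pow_succ q n]
      simp only [qPoch_zero, pow_zero]
      generalize (q : ℂ) ^ n = N at hNi ⊢
      linear_combination ((1 : ℂ) + x * x⁻¹ + a * b * q + a * b * x * q * x⁻¹) * hxi + ((-1 : ℂ) * a * b * q + (-1 : ℂ) * a * b * q * N) * hNi
    · -- k = j + 1
      have hxq : qPoch (x / q) q (j + 1) = (1 - x / q) * qPoch x q j := by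
        rw [qPoch_succ_left, div_mul_cancel₀ _ hq]
      have hqx : (x - 1) * qPoch (q * x) q (j + 1)
          = -(qPoch x q j * (1 - x * q ^ j) * (1 - x * (q ^ j * q))) := by
        have h1 : qPoch x q (j + 1 + 1) = (1 - x) * qPoch (x * q) q (j + 1) :=
          qPoch_succ_left x q (j + 1)
        have h2 : qPoch x q (j + 1 + 1)
            = qPoch x q j * (1 - x * q ^ j) * (1 - x * (q ^ j * q)) := by
          rw [qPoch_succ, qPoch_succ, pow_succ]
        rw [mul_comm q x, show (x - 1) * qPoch (x * q) q (j + 1)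
            = -((1 - x) * qPoch (x * q) q (j + 1)) by ring, ← h1, h2]
      -- G (j+1) with (j+1) - 1 = j
      have hGj1 : G (j + 1) = C (j + 1) * qPoch x q j *
          ((1 - q ^ j * q) * (1 - a * (q ^ j * q)) * (1 - c * (q ^ j * q))) := by
        simp only [hG, Nat.add_sub_cancel, pow_succ]
      rw [hGj1]
      rw [qPoch_succ x q j, hxq]
      have hD : q ^ (j + 1) * (q * (x - 1) * a * (b * x - c) / x ^ 2) * qPoch (q * x) q (j + 1)
          = q ^ (j + 1) * (q * a * (b * x - c) / x ^ 2) * ((x - 1) * qPoch (q * x) q (j + 1)) := by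
        ring
      rw [hD, hqx, hpow]
      simp only [pow_succ]
      generalize qPoch x q j = px
      generalize C (j + 1) = c1
      generalize (q : ℂ) ^ n = N at hNi ⊢
      generalize (q : ℂ) ^ j = t
      linear_combination (q * t * px * c1 + (-1 : ℂ) * x * q * t * px * c1 * q⁻¹ + x * q * t * px * c1 * x⁻¹ + (-1 : ℂ) * x ^ 2 * q * t * px * c1 * x⁻¹ * q⁻¹ + c * q ^ 2 * t * px * c1 * q⁻¹ + (-1 : ℂ) * c * q ^ 2 * t ^ 2 * px * c1 + c * x * q ^ 2 * t * px * c1 * x⁻¹ * q⁻¹ + (-1 : ℂ) * c * x * q ^ 2 * t ^ 2 * px * c1 * x⁻¹ + a * q ^ 2 * t * px * c1 * q⁻¹ + (-1 : ℂ) * a * q ^ 2 * t ^ 2 * px * c1 + a * x * q ^ 2 * t * px * c1 * x⁻¹ * q⁻¹ + (-1 : ℂ) * a * x * q ^ 2 * t ^ 2 * px * c1 * x⁻¹ + a * c * q ^ 2 * t * px * c1 * x⁻¹ + (-1 : ℂ) * a * c * q ^ 2 * t ^ 2 * px * c1 + (-1 : ℂ) * a * c * q ^ 3 * t * px * c1 *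 x⁻¹ * q⁻¹ + a * c * q ^ 3 * t ^ 3 * px * c1 + (-1 : ℂ) * a * c * x * q ^ 2 * t ^ 2 * px * c1 * x⁻¹ + a * c * x * q ^ 3 * t ^ 3 * px * c1 * x⁻¹ + a * b * q ^ 3 * t ^ 2 * px * c1 + a * b * x * q ^ 3 * t ^ 2 * px * c1 * x⁻¹ + (-1 : ℂ) * a * b * x * q ^ 3 * t ^ 3 * px * c1 + (-1 : ℂ) * a * b * x ^ 2 * q ^ 3 * t ^ 3 * px * c1 * x⁻¹) * hxi + ((-1 : ℂ) * x * t * px * c1 + c * q * t * px * c1 + a * q * t * px * c1 + (-1 : ℂ) * a * c * q ^ 2 * t * px * c1 * x⁻¹) * hqi + ((-1 : ℂ) * a * b * q ^ 2 * N * t * px * c1 + (-1 : ℂ) * a * b * q ^ 3 * t ^ 2 * px * c1 + a * b * x * q ^ 2 * N * t ^ 2 * px * c1 + a * b * x * q ^ 3 * t ^ 3 * px * c1) * hNi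
  -- assemble
  rw [hP x, hP (x / q), hP (q * x), Finset.mul_sum, Finset.mul_sum, Finset.mul_sum,
    Finset.mul_sum, ← sub_eq_zero, ← Finset.sum_add_distrib, ← Finset.sum_add_distrib,
    ← Finset.sum_sub_distrib, Finset.sum_congr rfl key, Finset.sum_range_sub, hGtop, hG0,
    sub_zero]
end
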